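/- The raise operator preserves μ and strictly increases the discernment factor: for A ∈ μ with some column whose 1 is not in the last row (or some empty column), the raised matrix R̂A obtained by incrementing by one the row index of the occupied entry of the leftmost such column (or placing a 1 in position (0,0) if A = V) satisfies R̂A ∈ μ and D(R̂A) > D(A). -/

import Mathlib

open Finset

/-- The discernment factor `D(A)` with coefficients `η i j = m (j+1) + i + b`. -/
noncomputable def discern (M N : ℕ) (m b : ℝ) (A : Fin (M + 1) → Fin (N + 1) → ℝ) : ℝ :=
  (∑ i : Fin (M + 1), ∑ j : Fin (N + 1), (m * ((j : ℝ) + 1) + (i : ℝ) + b) * A i j) /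
    (∑ j : Fin (N + 1), (m * ((j : ℝ) + 1) + (M : ℝ) + b))

/-- the raise operator preserves `μ` and strictly increases the
discernment factor. Here `y` is the leftmost column of `A` whose `1` is not in the
last row (possibly an empty column; if `A = V` this is column `0` and `R̂A` places a
`1` at `(0,0)`), and `R` is the raised matrix: equal to `A` outside column `y`, and in
column `y` the occupied entry is moved one row down (or a `1` is placed at row `0` if
the column is empty). -/
theorem raise_mem_mu_and_discern_lt (M N : ℕ) (m b : ℝ) (hm : 0 < m) (hb : 0 < b)
    (A : Fin (M + 1) → Fin (N + 1) → ℝ)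
    (h01 : ∀ i j, A i j = 0 ∨ A i j = 1)
    (hcol : ∀ j, ∑ i, A i j ≤ 1)
    (y : Fin (N + 1))
    (hy : A (Fin.last M) y ≠ 1)
    (hleft : ∀ y' : Fin (N + 1), y' < y → A (Fin.last M) y' = 1)
    (R : Fin (M + 1) → Fin (N + 1) → ℝ)
    (hRout : ∀ i j, j ≠ y → R i j = A i j)
    (hRempty : (∀ i, A i y = 0) →
      ∀ i : Fin (M + 1), R i y = if i = (0 : Fin (M + 1)) then 1 else 0)
    (hRocc : ∀ q : Fin M, A q.castSucc y = 1 →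
      ∀ i : Fin (M + 1), R i y = if i = q.succ then 1 else 0) :
    (∀ i j, R i j = 0 ∨ R i j = 1) ∧
    (∀ j, ∑ i, R i j ≤ 1) ∧
    discern M N m b A < discern M N m b R := by
  -- description of column y of R as an indicator, together with strict increase of
  -- the weighted column sum
  obtain ⟨t, hRy, hlt⟩ : ∃ t : Fin (M + 1),
      (∀ i, R i y = if i = t then 1 else 0) ∧
      (∑ i : Fin (M + 1), (m * ((y : ℝ) + 1) + (i : ℝ) + b) * A i y) <
        ∑ i : Fin (M + 1), (m * ((y : ℝ) + 1) + (i : ℝ) + b) * R i y := by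
    by_cases h : ∀ i, A i y = 0
    · refine ⟨0, hRempty h, ?_⟩
      have h1 : (∑ i : Fin (M + 1), (m * ((y : ℝ) + 1) + (i : ℝ) + b) * A i y) = 0 := by
        simp [h]
      have h2 : (∑ i : Fin (M + 1), (m * ((y : ℝ) + 1) + (i : ℝ) + b) * R i y)
          = m * ((y : ℝ) + 1) + (0 : Fin (M+1)) + b := by
        simp [hRempty h, mul_ite]
      rw [h1, h2]
      have : (0 : ℝ) < m * ((y : ℝ) + 1) := by positivity
      simp only [Fin.val_zero, Nat.cast_zero]
      linarith
    · push_neg at h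
      obtain ⟨i0, hi0⟩ := h
      have hi1 : A i0 y = 1 := (h01 i0 y).resolve_left hi0
      have hne : i0 ≠ Fin.last M := fun e => hy (e ▸ hi1)
      obtain ⟨q, rfl⟩ : ∃ q : Fin M, q.castSucc = i0 := Fin.exists_castSucc_eq.mpr hne
      -- all other entries of column y are 0
      have hAzero : ∀ i, i ≠ q.castSucc → A i y = 0 := by
        intro i hi
        rcases h01 i y with h0 | h1
        · exact h0
        · exfalso
          have hsub : ({i, q.castSucc} : Finset (Fin (M+1))) ⊆ univ := subset_univ _
          have hnonneg : ∀ k ∈ (univ : Finset (Fin (M+1))), k ∉ ({i, q.castSucc} : Finset (Fin (M+1))) → 0 ≤ A k y := by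
            intro k _ _
            rcases h01 k y with h | h <;> simp [h]
          have h2 : (∑ k ∈ ({i, q.castSucc} : Finset (Fin (M+1))), A k y) ≤ ∑ k, A k y :=
            Finset.sum_le_sum_of_subset_of_nonneg hsub hnonneg
          rw [Finset.sum_pair hi] at h2
          have := hcol y
          rw [h1, hi1] at h2
          linarith
      have hA : ∀ i, A i y = if i = q.castSucc then 1 else 0 := by
        intro i
        by_cases hi : i = q.castSucc
        · simp [hi, hi1]
        · simp [hi, hAzero i hi]
      refine ⟨q.succ, hRocc q hi1, ?_⟩
      have h1 : (∑ i : Fin (M + 1), (m * ((y : ℝ) + 1) + (i : ℝ) + b) * A i y)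
          = m * ((y : ℝ) + 1) + ((q.castSucc : Fin (M+1)) : ℝ) + b := by
        simp [hA, mul_ite]
      have h2 : (∑ i : Fin (M + 1), (m * ((y : ℝ) + 1) + (i : ℝ) + b) * R i y)
          = m * ((y : ℝ) + 1) + ((q.succ : Fin (M+1)) : ℝ) + b := by
        simp [hRocc q hi1, mul_ite]
      rw [h1, h2]
      have : ((q.succ : Fin (M+1)) : ℝ) = ((q.castSucc : Fin (M+1)) : ℝ) + 1 := by
        simp [Fin.val_succ, Fin.coe_castSucc]
      rw [this]
      linarith
  refine ⟨?_, ?_, ?_⟩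
  · intro i j
    by_cases hj : j = y
    · subst hj
      rw [hRy i]
      by_cases hi : i = t <;> simp [hi]
    · rw [hRout i j hj]; exact h01 i j
  · intro j
    by_cases hj : j = y
    · rw [hj]
      have : (∑ i, R i y) = 1 := by simp [hRy]
      rw [this]
    · calc (∑ i, R i j) = ∑ i, A i j := by
            exact Finset.sum_congr rfl fun i _ => hRout i j hj
        _ ≤ 1 := hcol j
  · unfold discern
    have hden : (0 : ℝ) < ∑ j : Fin (N + 1), (m * ((j : ℝ) + 1) + (M : ℝ) + b) := by
      apply Finset.sum_pos
      · intro j _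
        have : (0 : ℝ) < m * ((j : ℝ) + 1) := by positivity
        have hM : (0 : ℝ) ≤ (M : ℝ) := Nat.cast_nonneg M
        linarith
      · exact univ_nonempty
    apply div_lt_div_of_pos_right ?_ hden
    have hcomm : ∀ B : Fin (M+1) → Fin (N+1) → ℝ,
        (∑ i : Fin (M + 1), ∑ j : Fin (N + 1), (m * ((j : ℝ) + 1) + (i : ℝ) + b) * B i j)
          = ∑ j : Fin (N + 1), ∑ i : Fin (M + 1), (m * ((j : ℝ) + 1) + (i : ℝ) + b) * B i j :=
      fun B => Finset.sum_comm
    rw [hcomm A, hcomm R]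
    apply Finset.sum_lt_sum
    · intro j _
      by_cases hj : j = y
      · subst hj; exact le_of_lt hlt
      · apply le_of_eq
        exact Finset.sum_congr rfl fun i _ => by rw [hRout i j hj]
    · exact ⟨y, Finset.mem_univ y, hlt⟩
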